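/- arXiv:1304.2296 — 2 statements merged into one kernel-verified Lean document; each statement's English description precedes it below -/
import Mathlib

section
/- Let w ∈ C²(cl(𝔹₁)) be radially symmetric with ∂_ν w = 0 on ∂𝔹₁, and suppose there is r₀ ∈ (0,1) such that Δw < 0 on cl(𝔹₁)∖cl(𝔹_{r₀}) and Δw > 0 on 𝔹_{r₀}∖{0}. Then the profile 𝔴 of w, defined by 𝔴(|x|) = w(x) for x ∈ cl(𝔹₁), is non-decreasing on [0,1]; in particular min_{cl(𝔹₁)} w = w(0). -/
open MeasureTheory Metric Set Filter

noncomputable section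

/-- `E d` is euclidean space `ℝ^d`. -/
abbrev E (d : ℕ) := EuclideanSpace ℝ (Fin d)

/-- The Laplacian of `f`, as the sum of the second partial derivatives. -/
noncomputable def lap {d : ℕ} (f : E d → ℝ) (x : E d) : ℝ :=
  ∑ i : Fin d, fderiv ℝ (fun y => fderiv ℝ f y (EuclideanSpace.single i 1)) x
    (EuclideanSpace.single i 1)

/-- A radially symmetric function. -/
def Radial {d : ℕ} (f : E d → ℝ) : Prop := ∀ x y : E d, ‖x‖ = ‖y‖ → f x = f y

section Stmt4Helpers



lemma sum_sq_eq {d : ℕ} (x : E d) : ∑ i, (x i)^2 = ‖x‖^2 := by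
  rw [EuclideanSpace.norm_eq, Real.sq_sqrt (by positivity)]
  simp [Real.norm_eq_abs, sq_abs]

lemma hasFDerivAt_norm' {d : ℕ} {x : E d} (hx : x ≠ 0) :
    HasFDerivAt (fun z : E d => ‖z‖) (‖x‖⁻¹ • innerSL ℝ x) x := by
  have h1 : HasFDerivAt (fun z : E d => (inner ℝ z z : ℝ))
      ((fderivInnerCLM ℝ ((x : E d), x)).comp
        ((ContinuousLinearMap.id ℝ (E d)).prod (ContinuousLinearMap.id ℝ (E d)))) x :=
    (hasFDerivAt_id x).inner ℝ (hasFDerivAt_id x)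
  have hxx : (inner ℝ x x : ℝ) ≠ 0 := by
    rw [real_inner_self_eq_norm_sq]
    exact pow_ne_zero 2 (norm_ne_zero_iff.mpr hx)
  have h2 := HasDerivAt.comp_hasFDerivAt (f := fun z : E d => (inner ℝ z z : ℝ)) x (Real.hasDerivAt_sqrt hxx) h1
  have h3 : ((fun t => Real.sqrt t) ∘ fun z : E d => (inner ℝ z z : ℝ)) = fun z : E d => ‖z‖ := by
    funext z
    simp only [Function.comp_apply]
    rw [real_inner_self_eq_norm_sq, Real.sqrt_sq (norm_nonneg z)]
  rw [h3] at h2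
  refine h2.congr_fderiv ?_
  ext v
  simp only [ContinuousLinearMap.smul_apply, innerSL_apply_apply, ContinuousLinearMap.comp_apply,
    ContinuousLinearMap.prod_apply, ContinuousLinearMap.id_apply, fderivInnerCLM_apply,
    smul_eq_mul]
  rw [real_inner_self_eq_norm_sq, Real.sqrt_sq (norm_nonneg x), real_inner_comm v x]
  have : ‖x‖ ≠ 0 := norm_ne_zero_iff.mpr hx
  field_simp
  ring

lemma hasFDerivAt_comp_norm {d : ℕ} {g : ℝ → ℝ} {a : ℝ} {x : E d} (hx : x ≠ 0)
    (hg : HasDerivAt g a ‖x‖) :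
    HasFDerivAt (fun z : E d => g ‖z‖) ((a * ‖x‖⁻¹) • innerSL ℝ x) x := by
  have := hg.comp_hasFDerivAt x (hasFDerivAt_norm' hx)
  rwa [smul_smul] at this

end Stmt4Helpers

set_option linter.unnecessarySeqFocus false in
/-- Let `w ∈ C²(cl 𝔹₁)` be radially symmetric with `∂_ν w = 0` on
`∂𝔹₁`, and suppose there is `r₀ ∈ (0,1)` such that `Δw < 0` on `cl 𝔹₁ ∖ cl 𝔹_{r₀}`
and `Δw > 0` on `𝔹_{r₀} ∖ {0}`. Then the profile of `w` is non-decreasing on `[0,1]`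
(expressed here as monotonicity of `w` in the norm of its argument); in particular the
minimum of `w` over `cl 𝔹₁` is attained at the origin. -/
theorem stmt4 (d : ℕ) (hd : d = 1 ∨ d = 2) (w : E d → ℝ)
    (hreg : ContDiffOn ℝ 2 w (closedBall (0 : E d) 1))
    (hrad : Radial w)
    (hbd : ∀ x ∈ sphere (0 : E d) 1, fderiv ℝ w x x = 0)
    (r₀ : ℝ) (hr₀ : r₀ ∈ Ioo (0 : ℝ) 1)
    (hneg : ∀ x ∈ closedBall (0 : E d) 1 \ closedBall (0 : E d) r₀, lap w x < 0)
    (hpos : ∀ x ∈ ball (0 : E d) r₀ \ {0}, 0 < lap w x) :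
    (∀ x ∈ closedBall (0 : E d) 1, ∀ y ∈ closedBall (0 : E d) 1,
      ‖x‖ ≤ ‖y‖ → w x ≤ w y) ∧
    ∀ x ∈ closedBall (0 : E d) 1, w 0 ≤ w x := by

  have hdpos : (0:ℝ) < d := by rcases hd with h | h <;> simp [h]
  have hdR : Real.sqrt d ≠ 0 := by positivity
  -- the reference unit vector with all coordinates nonzero
  set u : E d := WithLp.toLp 2 (fun _ => (Real.sqrt d)⁻¹) with hu_def
  have hui : ∀ i : Fin d, u i = (Real.sqrt d)⁻¹ := fun i => rfl
  have hui0 : ∀ i : Fin d, u i ≠ 0 := fun i => inv_ne_zero hdR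
  have hu : ‖u‖ = 1 := by
    refine (EuclideanSpace.norm_eq u).trans ?_
    have h1 : ∀ i : Fin d, ‖u i‖ ^ 2 = (d:ℝ)⁻¹ := by
      intro i
      show ‖(Real.sqrt d)⁻¹‖ ^ 2 = (d:ℝ)⁻¹
      rw [Real.norm_eq_abs, sq_abs, inv_pow, Real.sq_sqrt hdpos.le]
    rw [Finset.sum_congr rfl (fun i _ => h1 i), Finset.sum_const]
    simp only [Finset.card_univ, Fintype.card_fin, nsmul_eq_mul]
    rw [mul_inv_cancel₀ hdpos.ne', Real.sqrt_one]
  have hnorm_smul : ∀ t : ℝ, ‖t • u‖ = |t| := by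
    intro t; rw [norm_smul, hu, Real.norm_eq_abs, mul_one]
  -- the profile
  set g : ℝ → ℝ := fun t => w (t • u) with hg_def
  have hwg : ∀ z : E d, w z = g ‖z‖ := by
    intro z
    exact hrad z (‖z‖ • u) (by rw [hnorm_smul, abs_of_nonneg (norm_nonneg z)])
  have hgC2 : ContDiffOn ℝ 2 g (Icc (-1:ℝ) 1) := by
    apply hreg.comp ((contDiff_id.smul contDiff_const).contDiffOn)
    intro t ht
    rw [mem_closedBall_zero_iff]
    show ‖t • u‖ ≤ 1
    rw [hnorm_smul, abs_le]
    exact ⟨ht.1, ht.2⟩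
  have hgcont : ContinuousOn g (Icc (-1:ℝ) 1) := hgC2.continuousOn
  set G : ℝ → ℝ := derivWithin g (Icc (-1:ℝ) 1) with hG_def
  have hGC1 : ContDiffOn ℝ 1 G (Icc (-1:ℝ) 1) :=
    hgC2.derivWithin (uniqueDiffOn_Icc (by norm_num)) (by norm_num)
  have hGcont : ContinuousOn G (Icc (-1:ℝ) 1) := hGC1.continuousOn
  have hGeq : ∀ t ∈ Ioo (-1:ℝ) 1, G t = deriv g t := by
    intro t ht
    exact derivWithin_of_mem_nhds (Icc_mem_nhds ht.1 ht.2)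
  have hgdiff : ∀ t ∈ Ioo (-1:ℝ) 1, HasDerivAt g (G t) t := by
    intro t ht
    have h1 : DifferentiableAt ℝ g t :=
      ((hgC2.differentiableOn (by norm_num)) t ⟨ht.1.le, ht.2.le⟩).differentiableAt
        (Icc_mem_nhds ht.1 ht.2)
    rw [hGeq t ht]
    exact h1.hasDerivAt
  have hGdiff : ∀ t ∈ Ioo (-1:ℝ) 1, HasDerivAt G (deriv G t) t := by
    intro t ht
    exact (((hGC1.differentiableOn (by norm_num)) t ⟨ht.1.le, ht.2.le⟩).differentiableAt
        (Icc_mem_nhds ht.1 ht.2)).hasDerivAt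
  -- interior formula for the gradient
  have hfd : ∀ z : E d, z ≠ 0 → ‖z‖ < 1 →
      HasFDerivAt w ((G ‖z‖ * ‖z‖⁻¹) • innerSL ℝ z) z := by
    intro z hz0 hz1
    have hzpos : 0 < ‖z‖ := norm_pos_iff.mpr hz0
    have h1 : HasDerivAt g (G ‖z‖) ‖z‖ := hgdiff ‖z‖ ⟨by linarith, hz1⟩
    have h2 := hasFDerivAt_comp_norm hz0 h1
    have h3 : (fun z : E d => g ‖z‖) = w := by funext z; rw [hwg z]
    rwa [h3] at h2
  have hfdi : ∀ z : E d, z ≠ 0 → ‖z‖ < 1 → ∀ i : Fin d,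
      fderiv ℝ w z (EuclideanSpace.single i 1) = G ‖z‖ * ‖z‖⁻¹ * z i := by
    intro z hz0 hz1 i
    rw [(hfd z hz0 hz1).fderiv]
    simp only [ContinuousLinearMap.smul_apply, innerSL_apply_apply, smul_eq_mul]
    rw [real_inner_comm]
    rw [EuclideanSpace.inner_single_left]
    simp
  -- the Laplacian of a radial function
  have hlapeq : ∀ z : E d, z ≠ 0 → ‖z‖ < 1 →
      lap w z = deriv G ‖z‖ + ((d:ℝ) - 1) * G ‖z‖ / ‖z‖ := by
    intro z hz0 hz1
    have hzpos : 0 < ‖z‖ := norm_pos_iff.mpr hz0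
    set r : ℝ := ‖z‖ with hr_def
    have hrne : r ≠ 0 := hzpos.ne'
    -- derivative of z ↦ G ‖z‖
    have hA : HasFDerivAt (fun y : E d => G ‖y‖) ((deriv G r * r⁻¹) • innerSL ℝ z) z :=
      hasFDerivAt_comp_norm hz0 (hGdiff r ⟨by linarith, hz1⟩)
    have hB : HasFDerivAt (fun y : E d => ‖y‖⁻¹) ((-(r^2)⁻¹ * r⁻¹) • innerSL ℝ z) z :=
      hasFDerivAt_comp_norm hz0 (hasDerivAt_inv hrne)
    have hAB := hA.mul hB
    have hterm : ∀ i : Fin d,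
        fderiv ℝ (fun y => fderiv ℝ w y (EuclideanSpace.single i 1)) z
          (EuclideanSpace.single i 1)
        = G r * r⁻¹ + (z i)^2 *
            (G r * (-(r^2)⁻¹ * r⁻¹) + r⁻¹ * (deriv G r * r⁻¹)) := by
      intro i
      have hC : HasFDerivAt (fun y : E d => y i)
          (EuclideanSpace.proj (𝕜 := ℝ) i) z := (EuclideanSpace.proj (𝕜 := ℝ) i).hasFDerivAt
      have hΦ := hAB.mul hC
      have hev : (fun y => fderiv ℝ w y (EuclideanSpace.single i 1)) =ᶠ[nhds z]
          fun y => G ‖y‖ * ‖y‖⁻¹ * y i := by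
        have hopen : IsOpen (ball (0 : E d) 1 \ {0}) :=
          isOpen_ball.sdiff isClosed_singleton
        filter_upwards [hopen.mem_nhds ⟨mem_ball_zero_iff.mpr hz1, hz0⟩] with y hy
        exact hfdi y hy.2 (mem_ball_zero_iff.mp hy.1) i
      rw [hev.fderiv_eq, show (fun y : E d => G ‖y‖ * ‖y‖⁻¹ * y i) =
          ((fun y => G ‖y‖) * fun y => ‖y‖⁻¹) * fun y => y i from rfl, hΦ.fderiv]
      simp only [ContinuousLinearMap.add_apply, ContinuousLinearMap.smul_apply,
        ContinuousLinearMap.coe_smul', Pi.smul_apply, Pi.mul_apply, innerSL_apply_apply, smul_eq_mul]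
      have hproj : (EuclideanSpace.proj (𝕜 := ℝ) i) (EuclideanSpace.single i 1) = 1 := by
        simp
      have hinner : (inner ℝ z (EuclideanSpace.single i (1:ℝ)) : ℝ) = z i := by
        rw [real_inner_comm, EuclideanSpace.inner_single_left]; simp
      rw [hproj, hinner]
      ring
    rw [show lap w z = ∑ i : Fin d,
        fderiv ℝ (fun y => fderiv ℝ w y (EuclideanSpace.single i 1)) z
          (EuclideanSpace.single i 1) from rfl]
    rw [Finset.sum_congr rfl (fun i _ => hterm i), Finset.sum_add_distrib,
      Finset.sum_const, ← Finset.sum_mul, sum_sq_eq z]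
    simp only [Finset.card_univ, Fintype.card_fin, nsmul_eq_mul]
    rw [← hr_def]
    field_simp
    ring
  -- the profile is even, so its derivative vanishes at the origin
  have hG0 : G 0 = 0 := by
    have heven : ∀ t : ℝ, g (-t) = g t := by
      intro t
      exact hrad ((-t) • u) (t • u) (by rw [hnorm_smul, hnorm_smul, abs_neg])
    have h1 : HasDerivAt g (G 0) 0 := hgdiff 0 (by norm_num)
    have h2 : HasDerivAt (fun t : ℝ => g (-t)) (G 0 * (-1)) 0 := by
      have hneg' : HasDerivAt (fun t : ℝ => -t) (-1 : ℝ) 0 := by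
        exact (hasDerivAt_id' (0:ℝ)).neg
      have := HasDerivAt.comp (h₂ := g) 0 (by simpa using h1) hneg'
      simpa [Function.comp_def] using this
    have h3 : (fun t : ℝ => g (-t)) = g := funext heven
    rw [h3] at h2
    have := h1.unique h2
    linarith
  -- the boundary condition forces the profile derivative to vanish at 1
  have hG1 : G 1 = 0 := by
    have humem : u ∈ sphere (0 : E d) 1 := by
      rw [mem_sphere_zero_iff_norm]; exact hu
    by_cases hw : DifferentiableAt ℝ w u
    · -- w is differentiable at u : use the boundary condition directly
      have hc : HasDerivAt (fun t : ℝ => (1 - t) • u) ((-1 : ℝ) • u) 0 := by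
        have h0 : HasDerivAt (fun t : ℝ => 1 - t) (-1 : ℝ) 0 := by
          simpa using ((hasDerivAt_id (0:ℝ)).const_sub 1)
        exact h0.smul_const u
      have h1 : HasDerivAt (fun t : ℝ => w ((1 - t) • u)) (-(fderiv ℝ w u u)) 0 := by
        have := hw.hasFDerivAt.comp_hasDerivAt_of_eq 0 hc (by simp)
        simpa [Function.comp_def] using this
      have h2 : (fun t : ℝ => w ((1 - t) • u)) =ᶠ[nhds (0:ℝ)] fun t => g (1 - t) := by
        filter_upwards [Iio_mem_nhds (by norm_num : (0:ℝ) < 1)] with t ht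
        rw [hwg, hnorm_smul, abs_of_pos (by simpa using ht)]
      have h3 : HasDerivAt (fun t : ℝ => g (1 - t)) (-(fderiv ℝ w u u)) 0 :=
        h1.congr_of_eventuallyEq h2.symm
      have h4 : HasDerivAt g (fderiv ℝ w u u) 1 := by
        have h5 : HasDerivAt (fun s : ℝ => 1 - s) (-1 : ℝ) 1 := by
          simpa using ((hasDerivAt_id (1:ℝ)).const_sub 1)
        have h7 := HasDerivAt.comp (h₂ := fun t : ℝ => g (1 - t)) 1 (by simpa using h3) h5
        simp only [Function.comp_def] at h7
        have heq : (fun s : ℝ => g (1 - (1 - s))) = g := by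
          funext s; rw [sub_sub_cancel]
        rw [heq] at h7
        simpa using h7
      have h6 := (h4.hasDerivWithinAt (s := Icc (-1:ℝ) 1)).derivWithin
        ((uniqueDiffOn_Icc (by norm_num : (-1:ℝ) < 1)) 1 ⟨by norm_num, le_rfl⟩)
      rw [hG_def, h6, hbd u humem]
    · -- w is not differentiable at u
      have hfz : fderiv ℝ w u = 0 := fderiv_zero_of_not_differentiableAt hw
      have hlapu : lap w u < 0 := by
        apply hneg u
        constructor
        · rw [mem_closedBall_zero_iff, hu]
        · rw [mem_closedBall_zero_iff, hu]
          push_neg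
          exact hr₀.2
      obtain ⟨i, hi⟩ : ∃ i : Fin d,
          fderiv ℝ (fun y => fderiv ℝ w y (EuclideanSpace.single i 1)) u
            (EuclideanSpace.single i 1) ≠ 0 := by
        by_contra h
        push_neg at h
        have : lap w u = 0 := Finset.sum_eq_zero (fun i _ => h i)
        linarith
      have hdF : DifferentiableAt ℝ (fun y => fderiv ℝ w y (EuclideanSpace.single i 1)) u := by
        by_contra h
        exact hi (by rw [fderiv_zero_of_not_differentiableAt h]; rfl)
      have hFu : fderiv ℝ w u (EuclideanSpace.single i 1) = 0 := by
        rw [hfz]; rfl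
      -- limit of the derivative from inside
      have hT1 : Tendsto (fun t : ℝ => fderiv ℝ w ((1 - t) • u) (EuclideanSpace.single i 1))
          (nhdsWithin (0:ℝ) (Ioi 0)) (nhds (fderiv ℝ w u (EuclideanSpace.single i 1))) := by
        have hcc : Tendsto (fun t : ℝ => (1 - t) • u) (nhdsWithin (0:ℝ) (Ioi 0)) (nhds u) := by
          have hc0 : ContinuousAt (fun t : ℝ => (1 - t) • u) 0 := by fun_prop
          have h := hc0.tendsto.mono_left (nhdsWithin_le_nhds (s := Ioi (0:ℝ)))
          simpa using h
        exact hdF.continuousAt.tendsto.comp hcc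
      have hev : (fun t : ℝ => fderiv ℝ w ((1 - t) • u) (EuclideanSpace.single i 1))
          =ᶠ[nhdsWithin (0:ℝ) (Ioi 0)] fun t => G (1 - t) * u i := by
        filter_upwards [Ioo_mem_nhdsGT_of_mem (⟨le_rfl, by norm_num⟩ : (0:ℝ) ∈ Ico 0 1)]
          with t ht
        have h1t : (0:ℝ) < 1 - t := by linarith [ht.2]
        have hz0 : (1 - t) • u ≠ 0 := by
          rw [← norm_pos_iff, hnorm_smul, abs_of_pos h1t]; exact h1t
        have hz1 : ‖(1 - t) • u‖ < 1 := by
          rw [hnorm_smul, abs_of_pos h1t]; linarith [ht.1]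
        rw [hfdi _ hz0 hz1 i, hnorm_smul, abs_of_pos h1t]
        have hzi : ((1 - t) • u) i = (1 - t) * u i := rfl
        rw [hzi]
        field_simp
      have hT2 : Tendsto (fun t : ℝ => G (1 - t) * u i)
          (nhdsWithin (0:ℝ) (Ioi 0)) (nhds (G 1 * u i)) := by
        have hGc : ContinuousWithinAt G (Icc (-1:ℝ) 1) 1 := hGcont 1 ⟨by norm_num, le_rfl⟩
        have hmap : Tendsto (fun t : ℝ => 1 - t) (nhdsWithin (0:ℝ) (Ioi 0))
            (nhdsWithin (1:ℝ) (Icc (-1:ℝ) 1)) := by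
          rw [tendsto_nhdsWithin_iff]
          constructor
          · have : ContinuousAt (fun t : ℝ => 1 - t) 0 := by fun_prop
            simpa using this.tendsto.mono_left nhdsWithin_le_nhds
          · filter_upwards [Ioo_mem_nhdsGT_of_mem (⟨le_rfl, by norm_num⟩ : (0:ℝ) ∈ Ico 0 1)]
              with t ht
            exact ⟨by linarith [ht.2], by linarith [ht.1]⟩
        exact (hGc.tendsto.comp hmap).mul_const (u i)
      have hkey : fderiv ℝ w u (EuclideanSpace.single i 1) = G 1 * u i :=
        tendsto_nhds_unique (hT1.congr' hev) hT2
      rw [hFu] at hkey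
      rcases mul_eq_zero.mp hkey.symm with h | h
      · exact h
      · exact absurd h (hui0 i)
  -- the comparison function φ r = r^(d-1) * G r
  set φ : ℝ → ℝ := fun r => r^(d-1) * G r with hφ_def
  have hφd : ∀ r ∈ Ioo (0:ℝ) 1, HasDerivAt φ (r^(d-1) * lap w (r • u)) r := by
    intro r hr
    have hr0 : (0:ℝ) < r := hr.1
    have hru0 : r • u ≠ 0 := by
      rw [← norm_pos_iff, hnorm_smul, abs_of_pos hr0]; exact hr0
    have hru1 : ‖r • u‖ < 1 := by rw [hnorm_smul, abs_of_pos hr0]; exact hr.2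
    have hlap : lap w (r • u) = deriv G r + ((d:ℝ) - 1) * G r / r := by
      rw [hlapeq _ hru0 hru1, hnorm_smul, abs_of_pos hr0]
    have h1 : HasDerivAt φ ((↑(d-1) * r^(d-1-1)) * G r + r^(d-1) * deriv G r) r :=
      (hasDerivAt_pow (d-1) r).mul (hGdiff r ⟨by linarith, hr.2⟩)
    convert h1 using 1
    rw [hlap]
    rcases hd with h | h <;> subst h <;> simp <;> field_simp <;> ring
  have hφcont : ContinuousOn φ (Icc (0:ℝ) 1) := by
    apply ContinuousOn.mul
    · exact (continuous_pow (d-1)).continuousOn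
    · exact hGcont.mono (fun x hx => ⟨by linarith [hx.1], hx.2⟩)
  have hmono1 : StrictMonoOn φ (Icc 0 r₀) := by
    apply strictMonoOn_of_deriv_pos (convex_Icc 0 r₀)
    · exact hφcont.mono (fun x hx => ⟨hx.1, le_trans hx.2 hr₀.2.le⟩)
    · intro r hr
      rw [interior_Icc] at hr
      have hrIoo : r ∈ Ioo (0:ℝ) 1 := ⟨hr.1, lt_trans hr.2 hr₀.2⟩
      rw [(hφd r hrIoo).deriv]
      apply mul_pos (pow_pos hr.1 _)
      apply hpos
      refine ⟨?_, ?_⟩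
      · rw [mem_ball_zero_iff, hnorm_smul, abs_of_pos hr.1]; exact hr.2
      · simp only [mem_singleton_iff]
        intro h
        have := congrArg norm h
        rw [hnorm_smul, abs_of_pos hr.1, norm_zero] at this
        exact hr.1.ne' this
  have hanti : StrictAntiOn φ (Icc r₀ 1) := by
    apply strictAntiOn_of_deriv_neg (convex_Icc r₀ 1)
    · exact hφcont.mono (fun x hx => ⟨le_trans hr₀.1.le hx.1, hx.2⟩)
    · intro r hr
      rw [interior_Icc] at hr
      have hr0 : (0:ℝ) < r := lt_trans hr₀.1 hr.1
      have hrIoo : r ∈ Ioo (0:ℝ) 1 := ⟨hr0, hr.2⟩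
      rw [(hφd r hrIoo).deriv]
      have hlapneg : lap w (r • u) < 0 := by
        apply hneg
        constructor
        · rw [mem_closedBall_zero_iff, hnorm_smul, abs_of_pos hr0]; exact hrIoo.2.le
        · rw [mem_closedBall_zero_iff, hnorm_smul, abs_of_pos hr0]
          push_neg
          exact hr.1
      exact mul_neg_of_pos_of_neg (pow_pos hr0 _) hlapneg
  have hφ0 : φ 0 = 0 := by
    rcases hd with h | h <;> subst h <;> simp [hφ_def, hG0]
  have hφ1 : φ 1 = 0 := by simp [hφ_def, hG1]
  have hGnonneg : ∀ r ∈ Ioo (0:ℝ) 1, 0 < G r := by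
    intro r hr
    have hφr : 0 < φ r := by
      rcases le_or_gt r r₀ with h | h
      · have := hmono1 ⟨le_rfl, hr₀.1.le⟩ ⟨hr.1.le, h⟩ hr.1
        rwa [hφ0] at this
      · have := hanti ⟨h.le, hr.2.le⟩ ⟨hr₀.2.le, le_rfl⟩ hr.2
        rwa [hφ1] at this
    have hφr' : 0 < r ^ (d-1) * G r := hφr
    rcases mul_pos_iff.mp hφr' with ⟨_, h2⟩ | ⟨h1, _⟩
    · exact h2
    · exact absurd (pow_pos hr.1 (d-1)) (by linarith)
  have hgmono : MonotoneOn g (Icc (0:ℝ) 1) := by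
    apply monotoneOn_of_deriv_nonneg (convex_Icc 0 1)
    · exact hgcont.mono (fun x hx => ⟨by linarith [hx.1], hx.2⟩)
    · rw [interior_Icc]
      intro r hr
      exact ((hgdiff r ⟨by linarith [hr.1], hr.2⟩).differentiableAt).differentiableWithinAt
    · rw [interior_Icc]
      intro r hr
      rw [← hGeq r ⟨by linarith [hr.1], hr.2⟩]
      exact (hGnonneg r hr).le
  constructor
  · intro x hx y hy hxy
    rw [hwg x, hwg y]
    exact hgmono ⟨norm_nonneg x, mem_closedBall_zero_iff.mp hx⟩
      ⟨norm_nonneg y, mem_closedBall_zero_iff.mp hy⟩ hxy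
  · intro x hx
    rw [hwg 0, hwg x, norm_zero]
    exact hgmono ⟨le_rfl, by norm_num⟩
      ⟨norm_nonneg x, mem_closedBall_zero_iff.mp hx⟩ (norm_nonneg x)
end
end

section
/- Let u : 𝔹₁ → ℝ be measurable with u(x) > −1 for almost every x ∈ 𝔹₁, and suppose that (3u² + u)(1+u)^{−3} is integrable on 𝔹₁ with ∫_{𝔹₁} (3u(x)² + u(x))(1+u(x))^{−3} dx ≤ 0. Then ∫_{𝔹₁} (1+u(x))^{−3} dx ≤ 10 |𝔹₁|. -/
open MeasureTheory Metric Set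

noncomputable section

/-- Let `u : 𝔹₁ → ℝ` be measurable with `u > −1` a.e. in `𝔹₁`, and
suppose `(3u² + u)(1+u)^{−3}` is integrable on `𝔹₁` with
`∫_{𝔹₁} (3u² + u)(1+u)^{−3} ≤ 0`. Then `∫_{𝔹₁} (1+u)^{−3} ≤ 10 |𝔹₁|`. -/
theorem stmt9 (d : ℕ) (hd : d = 1 ∨ d = 2) (u : E d → ℝ) (hmeas : Measurable u)
    (hgt : ∀ᵐ x ∂(volume.restrict (ball (0 : E d) 1)), -1 < u x)
    (hint : IntegrableOn (fun x => (3 * u x ^ 2 + u x) * ((1 + u x)⁻¹) ^ 3)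
      (ball (0 : E d) 1))
    (hle : (∫ x in ball (0 : E d) 1, (3 * u x ^ 2 + u x) * ((1 + u x)⁻¹) ^ 3) ≤ 0) :
    (∫⁻ x in ball (0 : E d) 1, ENNReal.ofReal (((1 + u x)⁻¹) ^ 3))
      ≤ 10 * volume (ball (0 : E d) 1) := by
  set s := ball (0 : E d) 1 with hs
  set g : E d → ℝ := fun x => (3 * u x ^ 2 + u x) * ((1 + u x)⁻¹) ^ 3 + 9 with hg
  have hvol : volume s < ⊤ := measure_ball_lt_top
  have hconst : IntegrableOn (fun _ : E d => (9 : ℝ)) s := integrableOn_const hvol.ne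
  have hgint : IntegrableOn g s := hint.add hconst
  -- pointwise bound
  have hpt : ∀ᵐ x ∂(volume.restrict s), ((1 + u x)⁻¹) ^ 3 ≤ g x := by
    filter_upwards [hgt] with x hx
    have ht0 : 0 < 1 + u x := by linarith
    rw [hg]
    have hy0 : 0 < ((1 + u x)⁻¹) ^ 3 := by positivity
    have hy : ((1 + u x)⁻¹) ^ 3 * (1 + u x) ^ 3 = 1 := by
      field_simp
    have key : 0 ≤ 9 * (1 + u x) ^ 3 + 3 * u x ^ 2 + u x - 1 := by
      nlinarith [mul_nonneg (sq_nonneg (3 * (1 + u x) - 1)) ht0.le]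
    simp only
    nlinarith [hy, mul_nonneg key hy0.le]
  have hf0 : ∀ᵐ x ∂(volume.restrict s), 0 ≤ ((1 + u x)⁻¹) ^ 3 := by
    filter_upwards [hgt] with x hx
    have : 0 < 1 + u x := by linarith
    positivity
  have hg0 : ∀ᵐ x ∂(volume.restrict s), 0 ≤ g x := by
    filter_upwards [hpt, hf0] with x h1 h2
    exact le_trans h2 h1
  have h910 : (ENNReal.ofReal 9) ≤ 10 := by
    rw [show (9:ℝ) = ((9:ℕ):ℝ) by norm_num, ENNReal.ofReal_natCast]
    norm_num
  calc (∫⁻ x in s, ENNReal.ofReal (((1 + u x)⁻¹) ^ 3))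
      ≤ ∫⁻ x in s, ENNReal.ofReal (g x) :=
        lintegral_mono_ae (hpt.mono fun x h => ENNReal.ofReal_le_ofReal h)
    _ = ENNReal.ofReal (∫ x in s, g x) :=
        (ofReal_integral_eq_lintegral_ofReal hgint hg0).symm
    _ ≤ ENNReal.ofReal (9 * (volume s).toReal) := by
        apply ENNReal.ofReal_le_ofReal
        rw [hg, integral_add hint hconst, integral_const, smul_eq_mul,
          measureReal_restrict_apply_univ, measureReal_def]
        linarith [hle]
    _ ≤ 10 * volume s := by
        rw [ENNReal.ofReal_mul (by norm_num), ENNReal.ofReal_toReal hvol.ne]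
        exact mul_le_mul_left h910 _
end
end
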